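/- Let n ≥ 2 and, in the group Ñ_{n,2}, let g = ∏_{1 ≤ l < k ≤ n} z_{kl} be the product of all basic commutators z_{kl} = [y_k, y_l] with 1 ≤ l < k ≤ n (these commutators are central, so the order of the factors is immaterial). Then g cannot be written as a product of fewer than 2(n−1) palindromes with respect to the generating family Y = (y_1, …, y_n). -/

import Mathlib

/-- The element of `G` represented by a word in the alphabet `X^{±1}`:
a letter `(i, true)` stands for `X i` and `(i, false)` for `(X i)⁻¹`. -/
def evalWord {G : Type*} {n : ℕ} [Group G] (X : Fin n → G) (w : List (Fin n × Bool)) : G :=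
  (w.map fun l => if l.2 then X l.1 else (X l.1)⁻¹).prod

/-- `g` is a palindrome with respect to the generating family `X` if it is represented by
some word whose sequence of letters equals its reverse. -/
def IsPalindrome {G : Type*} {n : ℕ} [Group G] (X : Fin n → G) (g : G) : Prop :=
  ∃ w : List (Fin n × Bool), w.reverse = w ∧ evalWord X w = g

/-- `g` is a product of `k` palindromes with respect to `X`. -/
def IsPalProd {G : Type*} {n : ℕ} [Group G] (X : Fin n → G) (k : ℕ) (g : G) : Prop :=
  ∃ f : Fin k → G, (∀ i, IsPalindrome X (f i)) ∧ (List.ofFn f).prod = g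

/-- The palindromic length of `g` with respect to `X`, valued in `ℕ∞`. -/
noncomputable def palLength {G : Type*} {n : ℕ} [Group G] (X : Fin n → G) (g : G) : ℕ∞ :=
  sInf {k : ℕ∞ | ∃ m : ℕ, k = (m : ℕ∞) ∧ IsPalProd X m g}

/-- The palindromic width of `G` with respect to `X`, valued in `ℕ∞`. -/
noncomputable def palWidth {G : Type*} {n : ℕ} [Group G] (X : Fin n → G) : ℕ∞ :=
  ⨆ g : G, palLength X g

/-- The free nilpotent group `N_{n,r}` of rank `n` and step `r`: the quotient of the free
group on `n` generators by `γ_{r+1} = lowerCentralSeries _ r` (indices: `γ_1` is the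
whole group and corresponds to index `0`). -/
abbrev FreeNilpotent (n r : ℕ) :=
  FreeGroup (Fin n) ⧸ (⊤ : Subgroup (FreeGroup (Fin n))).lowerCentralSeries r

/-- The images `x_1, …, x_n` of the free basis in `N_{n,r}`. -/
def nilGen (n r : ℕ) (i : Fin n) : FreeNilpotent n r :=
  QuotientGroup.mk (FreeGroup.of i)

/-- `Ñ_{n,r}`: the quotient of `N_{n,r}` by the normal closure of the squares of the
generators. -/
abbrev TildeNil (n r : ℕ) :=
  FreeNilpotent n r ⧸ Subgroup.normalClosure (Set.range fun i : Fin n => nilGen n r i ^ 2)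

/-- The generating family `y_1, …, y_n` of `Ñ_{n,r}`. -/
def tnGen (n r : ℕ) (i : Fin n) : TildeNil n r := QuotientGroup.mk (nilGen n r i)

/-- The commutator convention of the paper: `[a, b] = a⁻¹ b⁻¹ a b`. -/
def pcomm {G : Type*} [Group G] (a b : G) : G := a⁻¹ * b⁻¹ * a * b

/-- The list of all pairs `(k, l)` of indices with `l < k`, used to order the product of all
basic commutators `z_{kl}` (which are central in `Ñ_{n,2}`, so the order is immaterial). -/
def pairList (n : ℕ) : List (Fin n × Fin n) :=
  (List.finRange n).flatMap fun k => ((List.finRange n).filter fun l => l < k).map fun l => (k, l)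

namespace PalAux
def ee {n : ℕ} (i : Fin n) : Fin n → ZMod 2 := fun j => if j = i then 1 else 0
structure HH (n : ℕ) where
  a : Fin n → ZMod 2
  c : Fin n → Fin n → ZMod 2
namespace HH
variable {n : ℕ}
@[ext] theorem ext' {p q : HH n} (h1 : p.a = q.a) (h2 : p.c = q.c) : p = q := by
  cases p; cases q; simp_all
def bet (x y : Fin n → ZMod 2) : Fin n → Fin n → ZMod 2 :=
  fun k l => if l < k then x k * y l else 0
instance : Mul (HH n) := ⟨fun p q => ⟨p.a + q.a, fun k l => p.c k l + q.c k l + bet p.a q.a k l⟩⟩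
instance : One (HH n) := ⟨⟨0, 0⟩⟩
instance : Inv (HH n) := ⟨fun p => ⟨p.a, fun k l => p.c k l + bet p.a p.a k l⟩⟩
@[simp] theorem mul_a (p q : HH n) : (p * q).a = p.a + q.a := rfl
@[simp] theorem mul_c (p q : HH n) (k l : Fin n) :
    (p * q).c k l = p.c k l + q.c k l + bet p.a q.a k l := rfl
@[simp] theorem one_a : (1 : HH n).a = 0 := rfl
@[simp] theorem one_c : (1 : HH n).c = 0 := rfl
@[simp] theorem inv_a (p : HH n) : (p⁻¹).a = p.a := rfl
@[simp] theorem inv_c (p : HH n) (k l : Fin n) :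
    (p⁻¹).c k l = p.c k l + bet p.a p.a k l := rfl
theorem z2 : ∀ x : ZMod 2, x + x = 0 := by decide
instance : Group (HH n) where
  mul_assoc p q r := by
    ext k l
    · simp [add_assoc]
    · simp only [mul_c, mul_a, bet, Pi.add_apply]
      split_ifs <;> ring
  one_mul p := by
    ext k l
    · simp
    · simp [bet]
  mul_one p := by
    ext k l
    · simp
    · simp [bet]
  inv_mul_cancel p := by
    ext k l
    · show p.a k + p.a k = 0
      exact z2 _
    · show (p.c k l + bet p.a p.a k l) + p.c k l + bet p.a p.a k l = 0
      linear_combination z2 (p.c k l) + z2 (bet p.a p.a k l)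
end HH

open HH

variable {n : ℕ}

def genH (i : Fin n) : HH n := ⟨ee i, 0⟩

/-- projection to the abelianisation -/
def πa : HH n →* Multiplicative (Fin n → ZMod 2) where
  toFun p := Multiplicative.ofAdd p.a
  map_one' := rfl
  map_mul' p q := rfl

theorem central_of_a_eq_zero {p : HH n} (h : p.a = 0) (q : HH n) : q * p = p * q := by
  ext k l
  · simp [h, Pi.add_apply]
  · simp [HH.bet, h, add_comm]

theorem comm_a (g h : HH n) : (g * h * g⁻¹ * h⁻¹).a = 0 := by
  funext j
  show g.a j + h.a j + g.a j + h.a j = 0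
  linear_combination z2 (g.a j) + z2 (h.a j)

theorem lcs2_bot : (⊤ : Subgroup (HH n)).lowerCentralSeries 2 = ⊥ := by
  rw [eq_bot_iff]
  have h1 : (⊤ : Subgroup (HH n)).lowerCentralSeries 1 ≤ MonoidHom.ker (πa (n := n)) := by
    rw [show (1:ℕ) = 0 + 1 from rfl, Subgroup.lowerCentralSeries_succ]
    apply Subgroup.commutator_le.mpr
    intro g _ h _
    show Multiplicative.ofAdd (g * h * g⁻¹ * h⁻¹).a = 1
    rw [comm_a]; rfl
  rw [show (2:ℕ) = 1 + 1 from rfl, Subgroup.lowerCentralSeries_succ]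
  apply Subgroup.commutator_le.mpr
  intro g hg h _
  have hga : g.a = 0 := h1 hg
  rw [Subgroup.mem_bot]
  have := central_of_a_eq_zero hga h
  group
  rw [← this]
  group

def φ0 : FreeGroup (Fin n) →* HH n := FreeGroup.lift genH

theorem bet_ee_ee (i : Fin n) : HH.bet (ee i) (ee i) = 0 := by
  funext k l
  simp only [HH.bet, ee]
  split_ifs with h1 h2 h3 <;> try rfl
  exact absurd (h2 ▸ h3 ▸ h1) (lt_irrefl _)

theorem genH_sq (i : Fin n) : genH i * genH i = 1 := by
  ext k l
  · show ee i k + ee i k = 0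
    exact HH.z2 _
  · show 0 + 0 + HH.bet (ee i) (ee i) k l = 0
    rw [bet_ee_ee]; simp

theorem genH_inv (i : Fin n) : (genH i)⁻¹ = genH i := by
  rw [inv_eq_iff_mul_eq_one, genH_sq]

theorem φ0_lcs : ∀ x ∈ (⊤ : Subgroup (FreeGroup (Fin n))).lowerCentralSeries 2, (φ0 x : HH n) = 1 := by
  intro x hx
  have : φ0 x ∈ Subgroup.map (φ0 (n := n)) ((⊤ : Subgroup (FreeGroup (Fin n))).lowerCentralSeries 2) :=
    Subgroup.mem_map_of_mem _ hx
  have h2 := Subgroup.lowerCentralSeries.map (φ0 (n := n)) 2 this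
  rw [lcs2_bot, Subgroup.mem_bot] at h2
  exact h2

def φ1 : FreeNilpotent n 2 →* HH n :=
  QuotientGroup.lift _ φ0 φ0_lcs

theorem φ1_nilGen (i : Fin n) : φ1 (nilGen n 2 i) = genH i := by
  show φ1 (QuotientGroup.mk (FreeGroup.of i)) = genH i
  show φ0 (FreeGroup.of i) = genH i
  simp [φ0]

theorem φ1_sq : ∀ x ∈ Subgroup.normalClosure (Set.range fun i : Fin n => nilGen n 2 i ^ 2),
    (φ1 x : HH n) = 1 := by
  intro x hx
  have : Subgroup.normalClosure (Set.range fun i : Fin n => nilGen n 2 i ^ 2) ≤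
      MonoidHom.ker (φ1 (n := n)) := by
    apply Subgroup.normalClosure_le_normal
    rintro y ⟨i, rfl⟩
    show φ1 (nilGen n 2 i ^ 2) = 1
    rw [map_pow, φ1_nilGen, pow_two, genH_sq]
  exact this hx

def φ2 : TildeNil n 2 →* HH n :=
  QuotientGroup.lift _ φ1 φ1_sq

theorem φ2_tnGen (i : Fin n) : φ2 (tnGen n 2 i) = genH i := by
  show φ2 (QuotientGroup.mk (nilGen n 2 i)) = genH i
  show φ1 (nilGen n 2 i) = genH i
  exact φ1_nilGen i


theorem evalWord_map {G G' : Type*} [Group G] [Group G'] (φ : G →* G') (X : Fin n → G) :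
    ∀ w, evalWord (fun i => φ (X i)) w = φ (evalWord X w) := by
  intro w
  induction w with
  | nil => simp [evalWord]
  | cons x t ih =>
      simp only [evalWord, List.map_cons, List.prod_cons] at *
      rw [ih]
      rcases x with ⟨i, b⟩
      cases b <;> simp

theorem evalWord_append {G : Type*} [Group G] (X : Fin n → G) (u v : List (Fin n × Bool)) :
    evalWord X (u ++ v) = evalWord X u * evalWord X v := by
  simp [evalWord]

theorem letter_eval (x : Fin n × Bool) :
    (if x.2 then genH x.1 else (genH x.1)⁻¹) = genH x.1 := by
  cases hb : x.2 <;> simp [genH_inv]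

theorem pal_eval {w : List (Fin n × Bool)} (hw : List.Palindrome w) :
    evalWord (genH (n := n)) w = 1 ∨ ∃ i v, evalWord (genH (n := n)) w = v * genH i * v⁻¹ := by
  induction hw with
  | nil => left; simp [evalWord]
  | singleton x =>
      right
      exact ⟨x.1, 1, by simp [evalWord, letter_eval x]⟩
  | @cons_concat x l _ ih =>
      have hstep : evalWord (genH (n := n)) (x :: (l ++ [x]))
          = genH x.1 * evalWord genH l * genH x.1 := by
        have : evalWord (genH (n := n)) [x] = genH x.1 := by simp [evalWord, letter_eval x]
        rw [show (x :: (l ++ [x])) = [x] ++ l ++ [x] from rfl, evalWord_append, evalWord_append,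
          this]
      rcases ih with h | ⟨i, v, h⟩
      · left
        rw [hstep, h, mul_one, genH_sq]
      · right
        refine ⟨i, genH x.1 * v, ?_⟩
        rw [hstep, h, mul_inv_rev, genH_inv]
        group

@[simp] theorem genH_a (i : Fin n) : (genH i).a = ee i := rfl
@[simp] theorem genH_c (i : Fin n) : (genH i).c = 0 := rfl

theorem conj_a (v : HH n) (i : Fin n) : (v * genH i * v⁻¹).a = ee i := by
  funext j
  show v.a j + ee i j + v.a j = ee i j
  linear_combination HH.z2 (v.a j)

theorem ee_ne {i j : Fin n} (h : j ≠ i) : ee i j = 0 := by simp [ee, h]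

theorem conj_c_zero (v : HH n) {i k l : Fin n} (hk : k ≠ i) (hl : l ≠ i) :
    (v * genH i * v⁻¹).c k l = 0 := by
  simp only [HH.mul_c, HH.mul_a, HH.inv_c, HH.inv_a, genH_a, genH_c, Pi.zero_apply,
    HH.bet, Pi.add_apply, ee_ne hk, ee_ne hl]
  split_ifs with h
  · linear_combination HH.z2 (v.c k l) + HH.z2 (v.a k * v.a l)
  · linear_combination HH.z2 (v.c k l)

/-- `p` has zero coordinates at the (unordered) pair `(k, l)`. -/
def Avoid (k l : Fin n) (p : HH n) : Prop :=
  p.a k = 0 ∧ p.a l = 0 ∧ p.c k l = 0 ∧ p.c l k = 0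

theorem avoid_one (k l : Fin n) : Avoid k l (1 : HH n) := by
  refine ⟨rfl, rfl, rfl, rfl⟩

theorem avoid_mul {k l : Fin n} {p q : HH n} (hp : Avoid k l p) (hq : Avoid k l q) :
    Avoid k l (p * q) := by
  obtain ⟨h1, h2, h3, h4⟩ := hp
  obtain ⟨g1, g2, g3, g4⟩ := hq
  refine ⟨?_, ?_, ?_, ?_⟩ <;>
    simp [HH.bet, Pi.add_apply, h1, h2, h3, h4, g1, g2, g3, g4]

theorem avoid_prod {k l : Fin n} (L : List (HH n)) (h : ∀ p ∈ L, Avoid k l p) :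
    Avoid k l L.prod := by
  induction L with
  | nil => exact avoid_one k l
  | cons p t ih =>
      rw [List.prod_cons]
      exact avoid_mul (h p (by simp)) (ih fun q hq => h q (by simp [hq]))

theorem prod_a (L : List (HH n)) : L.prod.a = (L.map HH.a).sum := by
  induction L with
  | nil => rfl
  | cons p t ih => simp [List.prod_cons, ih]

theorem prod_c_central (L : List (HH n)) (h : ∀ p ∈ L, p.a = 0) (k l : Fin n) :
    L.prod.c k l = (L.map fun p => p.c k l).sum := by
  induction L with
  | nil => rfl
  | cons p t ih =>
      have hp : p.a = 0 := h p (by simp)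
      rw [List.prod_cons, List.map_cons, List.sum_cons, HH.mul_c,
        ih fun q hq => h q (by simp [hq])]
      simp [HH.bet, hp]

theorem pcomm_a (i j : Fin n) : (pcomm (genH i) (genH j) : HH n).a = 0 := by
  funext k
  show ee i k + ee j k + ee i k + ee j k = 0
  linear_combination HH.z2 (ee i k) + HH.z2 (ee j k)

theorem pcomm_c {k l : Fin n} (hlk : l < k) (i j : Fin n) :
    (pcomm (genH i) (genH j) : HH n).c k l
      = (if (i, j) = (k, l) then (1 : ZMod 2) else 0)
        + (if (i, j) = (l, k) then (1 : ZMod 2) else 0) := by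
  have h1 : (pcomm (genH i) (genH j) : HH n).c k l
      = ee i k * ee j l + ee j k * ee i l := by
    simp only [pcomm, HH.mul_c, HH.mul_a, HH.inv_c, HH.inv_a, genH_a, genH_c, Pi.zero_apply,
      HH.bet, Pi.add_apply, if_pos hlk]
    linear_combination HH.z2 (ee i k * ee i l) + HH.z2 (ee j k * ee j l)
      + HH.z2 (ee i k * ee j l)
  have hmul : ∀ (p q : Prop) [Decidable p] [Decidable q],
      (if p then (1 : ZMod 2) else 0) * (if q then 1 else 0) = if p ∧ q then 1 else 0 := by
    intro p q _ _
    by_cases hp : p <;> by_cases hq : q <;> simp [hp, hq]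
  have hiff1 : ((i, j) = (k, l)) ↔ (k = i ∧ l = j) := by
    rw [Prod.mk.injEq]
    exact ⟨fun h => ⟨h.1.symm, h.2.symm⟩, fun h => ⟨h.1.symm, h.2.symm⟩⟩
  have hiff2 : ((i, j) = (l, k)) ↔ (k = j ∧ l = i) := by
    rw [Prod.mk.injEq]
    exact ⟨fun h => ⟨h.2.symm, h.1.symm⟩, fun h => ⟨h.2.symm, h.1.symm⟩⟩
  rw [h1]
  simp only [ee, hmul, hiff1, hiff2]

theorem sum_map_ite {α : Type*} [DecidableEq α] (v : α) (L : List α) (hL : L.Nodup) :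
    (L.map fun x => if x = v then (1 : ZMod 2) else 0).sum = if v ∈ L then 1 else 0 := by
  induction L with
  | nil => simp
  | cons x t ih =>
      obtain ⟨hx, ht⟩ := List.nodup_cons.mp hL
      rw [List.map_cons, List.sum_cons, ih ht]
      by_cases h : x = v
      · subst h
        rw [if_pos rfl, if_neg hx, if_pos (List.mem_cons_self (a := x) (l := t)), add_zero]
      · rw [if_neg h, zero_add]
        by_cases hv : v ∈ t
        · rw [if_pos hv, if_pos (List.mem_cons_of_mem x hv)]
        · rw [if_neg hv, if_neg (by simp [hv, Ne.symm h])]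

theorem mem_pairList {q : Fin n × Fin n} : q ∈ pairList n ↔ q.2 < q.1 := by
  rcases q with ⟨k, l⟩
  simp only [pairList, List.mem_flatMap, List.mem_map, List.mem_filter, List.mem_finRange,
    decide_eq_true_eq, Prod.mk.injEq]
  constructor
  · rintro ⟨a, -, b, ⟨-, hb⟩, rfl, rfl⟩
    exact hb
  · intro h
    exact ⟨k, trivial, l, ⟨trivial, h⟩, rfl, rfl⟩

theorem nodup_pairList : (pairList n).Nodup := by
  rw [pairList, List.nodup_flatMap]
  constructor
  · intro k _
    refine List.Nodup.map ?_ ((List.nodup_finRange n).filter _)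
    intro a b h
    injection h with h1 h2
  · refine (List.pairwise_lt_finRange n).imp ?_
    intro a b hab q hqa hqb
    simp only [Function.onFun, List.mem_map, List.mem_filter] at hqa hqb
    obtain ⟨x, -, rfl⟩ := hqa
    obtain ⟨y, -, h⟩ := hqb
    injection h with h1 h2
    exact absurd (h1 ▸ hab) (lt_irrefl _)



def targetH : HH n := ((pairList n).map fun q => pcomm (genH q.1) (genH q.2)).prod

theorem prod_a_apply (L : List (HH n)) (j : Fin n) :
    L.prod.a j = (L.map fun p => p.a j).sum := by
  induction L with
  | nil => rfl
  | cons p t ih => simp [List.prod_cons, ih]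

theorem targetH_a (j : Fin n) : (targetH (n := n)).a j = 0 := by
  rw [targetH, prod_a_apply, List.map_map]
  apply List.sum_eq_zero
  intro x hx
  simp only [List.mem_map, Function.comp] at hx
  obtain ⟨q, -, rfl⟩ := hx
  rw [pcomm_a]
  rfl

theorem targetH_c {k l : Fin n} (h : l < k) : (targetH (n := n)).c k l = 1 := by
  have hcent : ∀ p ∈ (pairList n).map fun q => pcomm (genH (n := n) q.1) (genH q.2), p.a = 0 := by
    intro p hp
    simp only [List.mem_map] at hp
    obtain ⟨q, -, rfl⟩ := hp
    exact pcomm_a q.1 q.2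
  rw [targetH, prod_c_central _ hcent k l, List.map_map]
  have hcong : ((pairList n).map
        ((fun p : HH n => p.c k l) ∘ fun q => pcomm (genH q.1) (genH q.2)))
      = (pairList n).map fun q => (if q = (k, l) then (1 : ZMod 2) else 0)
          + (if q = (l, k) then 1 else 0) := by
    apply List.map_congr_left
    intro q _
    exact pcomm_c h q.1 q.2
  rw [hcong, List.sum_map_add, sum_map_ite _ _ nodup_pairList, sum_map_ite _ _ nodup_pairList,
    if_pos (mem_pairList.mpr h), if_neg (fun hm => absurd (mem_pairList.mp hm) (asymm h)),
    add_zero]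

end PalAux

open PalAux

/-- For `n ≥ 2`, the product `g = ∏_{1 ≤ l < k ≤ n} z_{kl}` of all basic commutators
`z_{kl} = [y_k, y_l]` in `Ñ_{n,2}` is not a product of fewer than `2(n-1)` palindromes. -/
theorem prod_commutators_not_short_palProd (n : ℕ) (hn : 2 ≤ n) :
    ∀ m : ℕ, m < 2 * (n - 1) →
      ¬ IsPalProd (tnGen n 2) m
          (((pairList n).map fun q => pcomm (tnGen n 2 q.1) (tnGen n 2 q.2)).prod) := by
  intro m hm hcon
  classical
  obtain ⟨f, hf, hprod⟩ := hcon
  set F : Fin m → HH n := fun t => φ2 (f t) with hF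
  have hgen : (fun i => (φ2 (tnGen n 2 i) : HH n)) = genH := funext φ2_tnGen
  -- each factor is 1 or a conjugate of a generator
  have hFpal : ∀ t, F t = 1 ∨ ∃ i v, F t = v * genH i * v⁻¹ := by
    intro t
    obtain ⟨w, hrev, he⟩ := hf t
    have heq : evalWord (genH (n := n)) w = F t := by
      rw [← hgen, evalWord_map, he]
    rw [← heq]
    exact pal_eval (List.Palindrome.of_reverse_eq hrev)
  -- the product of the factors is the target element
  have hFprod : (List.ofFn F).prod = targetH (n := n) := by
    have h1 : (List.ofFn F) = (List.ofFn f).map φ2 := (List.map_ofFn (f := f) (g := φ2)).symm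
    rw [h1, ← map_list_prod, hprod, map_list_prod, List.map_map, targetH]
    congr 1
    apply List.map_congr_left
    intro q _
    simp only [Function.comp_apply, pcomm, map_mul, map_inv, φ2_tnGen]
  -- choose, for each factor, the generator index (or `none`)
  have hchoice : ∀ t, ∃ o : Option (Fin n),
      (o = none ∧ F t = 1) ∨ ∃ i v, o = some i ∧ F t = v * genH i * v⁻¹ := by
    intro t
    rcases hFpal t with h | ⟨i, v, h⟩
    · exact ⟨none, Or.inl ⟨rfl, h⟩⟩
    · exact ⟨some i, Or.inr ⟨i, v, rfl, h⟩⟩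
  choose idx hidx using hchoice
  have hFa : ∀ t (j : Fin n), (F t).a j = if idx t = some j then 1 else 0 := by
    intro t j
    rcases hidx t with ⟨h0, h1⟩ | ⟨i, v, h0, h1⟩
    · rw [h1, h0]
      simp
    · rw [h1, h0, conj_a]
      simp only [ee, Option.some.injEq]
      by_cases h : j = i
      · rw [if_pos h, if_pos h.symm]
      · rw [if_neg h, if_neg (Ne.symm h)]
  -- the fiber over each used generator index has even cardinality, hence at least 2
  have hfiber : ∀ i : Fin n, (∃ t, idx t = some i) →
      2 ≤ (Finset.univ.filter fun t => idx t = some i).card := by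
    intro i ⟨t0, ht0⟩
    have hsum : ∑ t : Fin m, (F t).a i = 0 := by
      have h1 : (List.ofFn F).prod.a i = 0 := by rw [hFprod]; exact targetH_a i
      rw [prod_a_apply, List.map_ofFn, List.sum_ofFn] at h1
      exact h1
    have hpar : ((Finset.univ.filter fun t => idx t = some i).card : ZMod 2) = 0 := by
      calc ((Finset.univ.filter fun t => idx t = some i).card : ZMod 2)
          = ∑ t : Fin m, if idx t = some i then 1 else 0 := (Finset.sum_boole _ _).symm
        _ = ∑ t : Fin m, (F t).a i := Finset.sum_congr rfl fun t _ => (hFa t i).symm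
        _ = 0 := hsum
    have hdvd : 2 ∣ (Finset.univ.filter fun t => idx t = some i).card :=
      (ZMod.natCast_eq_zero_iff _ 2).mp hpar
    have hpos : 0 < (Finset.univ.filter fun t => idx t = some i).card :=
      Finset.card_pos.mpr ⟨t0, by simp [ht0]⟩
    exact Nat.le_of_dvd hpos hdvd
  set T : Finset (Fin n) := Finset.univ.filter (fun i : Fin n => ∃ t, idx t = some i) with hT
  -- at most one generator index is unused
  have hTcard : n - 1 ≤ T.card := by
    by_contra hlt
    push_neg at hlt
    have hcompl : 1 < Tᶜ.card := by
      rw [Finset.card_compl, Fintype.card_fin]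
      omega
    obtain ⟨k, hk, l, hl, hkl⟩ := Finset.one_lt_card.mp hcompl
    have hmemT : ∀ j : Fin n, (∃ t, idx t = some j) → j ∈ T := by
      intro j hj
      rw [hT]
      exact Finset.mem_filter.mpr ⟨Finset.mem_univ _, hj⟩
    have hkT : ∀ t, idx t ≠ some k := fun t ht =>
      (Finset.mem_compl.mp hk) (hmemT k ⟨t, ht⟩)
    have hlT : ∀ t, idx t ≠ some l := fun t ht =>
      (Finset.mem_compl.mp hl) (hmemT l ⟨t, ht⟩)
    have havoid : Avoid k l ((List.ofFn F).prod) := by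
      apply avoid_prod
      intro p hp
      rw [List.mem_ofFn] at hp
      obtain ⟨t, rfl⟩ := hp
      rcases hidx t with ⟨h0, h1⟩ | ⟨i, v, h0, h1⟩
      · rw [h1]
        exact avoid_one k l
      · have hik : k ≠ i := fun h => hkT t (by rw [h0, h])
        have hil : l ≠ i := fun h => hlT t (by rw [h0, h])
        rw [h1]
        exact ⟨by rw [conj_a]; exact ee_ne hik, by rw [conj_a]; exact ee_ne hil,
          conj_c_zero v hik hil, conj_c_zero v hil hik⟩
    rw [hFprod] at havoid
    rcases lt_or_gt_of_ne hkl with h | h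
    · have := havoid.2.2.2
      rw [targetH_c h] at this
      exact one_ne_zero this
    · have := havoid.2.2.1
      rw [targetH_c h] at this
      exact one_ne_zero this
  -- counting
  set s : Finset (Fin m) := Finset.univ.filter (fun t : Fin m => (idx t).isSome) with hs
  have k0 : Fin n := ⟨0, by omega⟩
  set idx' : Fin m → Fin n := fun t => (idx t).getD k0 with hidx'
  have hmap : ∀ x ∈ s, idx' x ∈ T := by
    intro x hx
    rw [hs, Finset.mem_filter] at hx
    obtain ⟨i, hi⟩ := Option.isSome_iff_exists.mp hx.2
    rw [hT, Finset.mem_filter]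
    refine ⟨Finset.mem_univ _, ⟨x, ?_⟩⟩
    rw [hidx', hi]
    simp [hi]
  have hcard := Finset.card_eq_sum_card_fiberwise hmap
  have hfib_eq : ∀ i : Fin n,
      s.filter (fun x => idx' x = i) = Finset.univ.filter fun t => idx t = some i := by
    intro i
    ext t
    rw [Finset.mem_filter, hs, Finset.mem_filter, hidx', Finset.mem_filter]
    cases h : idx t <;> simp [h]
  have hchain : 2 * (n - 1) ≤ m := by
    have h1 : 2 * (n - 1) ≤ 2 * T.card := by omega
    have h2 : 2 * T.card ≤ ∑ i ∈ T, (Finset.univ.filter fun t => idx t = some i).card := by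
      calc 2 * T.card = ∑ _i ∈ T, 2 := by rw [Finset.sum_const, smul_eq_mul, mul_comm]
        _ ≤ _ := Finset.sum_le_sum fun i hi => hfiber i (by
            rw [hT, Finset.mem_filter] at hi
            exact hi.2)
    have h3 : ∑ i ∈ T, (Finset.univ.filter fun t => idx t = some i).card = s.card := by
      rw [hcard]
      exact Finset.sum_congr rfl fun i _ => by rw [hfib_eq]
    have h4 : s.card ≤ m := by
      calc s.card ≤ (Finset.univ : Finset (Fin m)).card := Finset.card_filter_le _ _
        _ = m := by rw [Finset.card_univ, Fintype.card_fin]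
    omega
  omega
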